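/- In the graded ring ℤ/2[w_2,w_3,w_4,w_5,w_6] (deg w_i = i), the four elements g_1 = w_3, g_2 = w_5², g_3 = w_4² + w_3w_5, g_4 = w_6² + w_3²w_6 + w_3w_4w_5 are algebraically independent over ℤ/2, and together with g_5 = w_3⁵ + w_3³w_6 + w_3²w_4w_5 + w_5³ they satisfy the relation g_1⁶g_4 + g_1⁴g_2g_3 + g_1⁵g_5 + g_2³ + g_5² = 0; moreover the ideal of all relations among g_1,…,g_5 in ℤ/2[g_1,…,g_5] (the kernel of the corresponding ring map from a polynomial ring in five variables) is the principal ideal generated by this relation. -/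

import Mathlib

open MvPolynomial

-- Variables: X 0 = w_2, X 1 = w_3, X 2 = w_4, X 3 = w_5, X 4 = w_6, over ℤ/2.

noncomputable def g1 : MvPolynomial (Fin 5) (ZMod 2) := X 1
noncomputable def g2 : MvPolynomial (Fin 5) (ZMod 2) := X 3 ^ 2
noncomputable def g3 : MvPolynomial (Fin 5) (ZMod 2) := X 2 ^ 2 + X 1 * X 3
noncomputable def g4 : MvPolynomial (Fin 5) (ZMod 2) := X 4 ^ 2 + X 1 ^ 2 * X 4 + X 1 * X 2 * X 3
noncomputable def g5 : MvPolynomial (Fin 5) (ZMod 2) :=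
  X 1 ^ 5 + X 1 ^ 3 * X 4 + X 1 ^ 2 * X 2 * X 3 + X 3 ^ 3

namespace RelationsAmongGAux

abbrev K := ZMod 2
abbrev R5 := MvPolynomial (Fin 5) K
abbrev R4 := MvPolynomial (Fin 4) K

noncomputable def frobAlg : R5 →ₐ[K] R5 where
  toFun x := x ^ 2
  map_one' := one_pow 2
  map_mul' x y := mul_pow x y 2
  map_zero' := zero_pow two_ne_zero
  map_add' x y := CharTwo.add_sq x y
  commutes' c := by
    have hc : c ^ 2 = c := by revert c; decide
    show (algebraMap K R5 c) ^ 2 = algebraMap K R5 c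
    rw [← map_pow, hc]

lemma frobAlg_apply (x : R5) : frobAlg x = x ^ 2 := rfl

lemma sq_aeval (v : Fin 4 → R5) (P : R4) :
    (aeval (fun i => v i ^ 2) : R4 →ₐ[K] R5) P = (aeval v P) ^ 2 := by
  have h : (aeval (fun i => v i ^ 2) : R4 →ₐ[K] R5) = frobAlg.comp (aeval v) := by
    apply algHom_ext; intro i
    simp [frobAlg_apply]
  rw [h]; rfl

noncomputable def G : Fin 4 → R5 := ![g1, g2, g3, g4]
noncomputable def u : Fin 4 → R5 := ![0, X 3, X 2, X 4]
noncomputable def σ₁ : R5 →ₐ[K] R5 := aeval ![X 0, 0, X 2, X 3, X 4]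

lemma σ₁_aeval (P : R4) : σ₁ (aeval G P) = (aeval u P) ^ 2 := by
  rw [← sq_aeval]
  have h : σ₁.comp (aeval G) = (aeval (fun i => u i ^ 2) : R4 →ₐ[K] R5) := by
    apply algHom_ext
    intro i
    fin_cases i <;> simp [σ₁, G, u, g1, g2, g3, g4]
  calc σ₁ (aeval G P) = (σ₁.comp (aeval G)) P := rfl
    _ = _ := by rw [h]

lemma σ₁_g5 : σ₁ g5 = X 3 ^ 3 := by simp [σ₁, g5]

-- parity lemma
lemma parity (a b : R5) (h : a ^ 2 = b ^ 2 * X 3 ^ 3) : b = 0 := by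
  by_contra hb
  have hX : (X 3 : R5) ≠ 0 := X_ne_zero 3
  have ha : a ≠ 0 := by
    intro h0
    rw [h0] at h
    have : b ^ 2 * X 3 ^ 3 = 0 := by rw [← h]; ring
    rcases mul_eq_zero.mp this with h1 | h1
    · exact hb (pow_eq_zero_iff (two_ne_zero) |>.mp h1)
    · exact hX (pow_eq_zero_iff (by norm_num) |>.mp h1)
  set Θ : R5 ≃ₐ[K] Polynomial R4 :=
    (renameEquiv K (Equiv.swap (0 : Fin 5) 3)).trans (finSuccEquiv K 4) with hΘ
  have hswap : Θ (X 3) = Polynomial.X := by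
    simp [hΘ, renameEquiv_apply, Equiv.swap_apply_right, finSuccEquiv_X_zero]
  have h2 : (Θ a) ^ 2 = (Θ b) ^ 2 * Polynomial.X ^ 3 := by
    have := congrArg Θ h
    simpa [map_mul, map_pow, hswap] using this
  have hΘa : Θ a ≠ 0 := fun hh => ha (by simpa using congrArg Θ.symm hh)
  have hΘb : Θ b ≠ 0 := fun hh => hb (by simpa using congrArg Θ.symm hh)
  have hd := congrArg Polynomial.natDegree h2
  rw [Polynomial.natDegree_mul (pow_ne_zero _ hΘb) (pow_ne_zero _ Polynomial.X_ne_zero),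
    Polynomial.natDegree_pow, Polynomial.natDegree_pow, Polynomial.natDegree_pow,
    Polynomial.natDegree_X] at hd
  omega

noncomputable def φ4 : R4 ≃ₐ[K] Polynomial (MvPolynomial (Fin 3) K) := finSuccEquiv K 3
noncomputable def c3 : MvPolynomial (Fin 3) K →ₐ[K] R5 := aeval ![X 3, X 2, X 4]

lemma c3_injective : Function.Injective c3 := by
  have h : c3 = (rename (![3, 2, 4] : Fin 3 → Fin 5) : MvPolynomial (Fin 3) K →ₐ[K] R5) := by
    apply algHom_ext; intro i
    fin_cases i <;> simp [c3]
  rw [h]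
  exact rename_injective _ (by decide)

lemma aeval_u_eq (P : R4) :
    aeval u P = Polynomial.eval₂ c3.toRingHom 0 (φ4 P) := by
  have h : (aeval u : R4 →ₐ[K] R5).toRingHom =
      (Polynomial.eval₂RingHom c3.toRingHom (0 : R5)).comp
        (φ4 : R4 ≃ₐ[K] Polynomial (MvPolynomial (Fin 3) K)).toRingEquiv.toRingHom := by
    apply ringHom_ext
    · intro c
      simp [φ4, c3, finSuccEquiv_apply, algebraMap_eq]
    · intro i
      match i with
      | 0 => simp [φ4, u, finSuccEquiv_X_zero]
      | 1 =>
        have h1 : (MvPolynomial.finSuccEquiv K 3) (X (1 : Fin 4)) = Polynomial.C (X 0) :=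
          finSuccEquiv_X_succ (j := 0)
        simp [φ4, u, c3, h1]
      | 2 =>
        have h1 : (MvPolynomial.finSuccEquiv K 3) (X (2 : Fin 4)) = Polynomial.C (X 1) :=
          finSuccEquiv_X_succ (j := 1)
        simp [φ4, u, c3, h1]
      | 3 =>
        have h1 : (MvPolynomial.finSuccEquiv K 3) (X (3 : Fin 4)) = Polynomial.C (X 2) :=
          finSuccEquiv_X_succ (j := 2)
        simp [φ4, u, c3, h1]
  exact congrFun (congrArg (fun f => f.toFun) h) P

lemma X0_dvd_of_aeval_u (P : R4) (h : aeval u P = 0) : ∃ Q, P = X 0 * Q := by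
  have h1 : Polynomial.eval₂ c3.toRingHom 0 (φ4 P) = 0 := by rw [← aeval_u_eq]; exact h
  rw [Polynomial.eval₂_at_zero] at h1
  have h2 : (φ4 P).coeff 0 = 0 := c3_injective (by simpa using h1)
  obtain ⟨q, hq⟩ := Polynomial.X_dvd_iff.mpr h2
  refine ⟨φ4.symm q, ?_⟩
  have hX0 : φ4.symm Polynomial.X = X 0 := by
    have := congrArg φ4.symm (finSuccEquiv_X_zero (R := K) (n := 3))
    simpa [φ4] using this.symm
  calc P = φ4.symm (φ4 P) := (φ4.symm_apply_apply P).symm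
    _ = φ4.symm (Polynomial.X * q) := by rw [hq]
    _ = X 0 * φ4.symm q := by rw [map_mul, hX0]

noncomputable def dd (P : R4) : ℕ := (φ4 P).natDegree

lemma dd_lt (Q : R4) (hQ : Q ≠ 0) : dd Q < dd (X 0 * Q) := by
  have hφ : φ4 (X 0 * Q) = Polynomial.X * φ4 Q := by
    rw [map_mul]
    congr 1
    simpa [φ4] using finSuccEquiv_X_zero (R := K) (n := 3)
  have hQ' : φ4 Q ≠ 0 := fun hh => hQ (by simpa using congrArg φ4.symm hh)
  show (φ4 Q).natDegree < (φ4 (X 0 * Q)).natDegree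
  rw [hφ, Polynomial.natDegree_mul Polynomial.X_ne_zero hQ', Polynomial.natDegree_X]
  omega

lemma zero_of_mul (A' : R4) (h : X 0 * A' = 0) : A' = 0 := by
  rcases mul_eq_zero.mp h with h1 | h1
  · exact absurd h1 (X_ne_zero 0)
  · exact h1

lemma descent (A B : R4) (h : aeval G A + aeval G B * g5 = 0) :
    ∃ A' B', A = X 0 * A' ∧ B = X 0 * B' ∧ aeval G A' + aeval G B' * g5 = 0 := by
  have hσ := congrArg σ₁ h
  rw [map_add, map_mul, σ₁_aeval, σ₁_aeval, σ₁_g5, map_zero] at hσ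
  have heq : (aeval u A) ^ 2 = (aeval u B) ^ 2 * X 3 ^ 3 := by
    have h' := eq_neg_of_add_eq_zero_left hσ
    rwa [CharTwo.neg_eq] at h'
  have hB : aeval u B = 0 := parity _ _ heq
  have hA : aeval u A = 0 := by
    have : (aeval u A) ^ 2 = 0 := by rw [heq, hB]; ring
    exact pow_eq_zero_iff two_ne_zero |>.mp this
  obtain ⟨A', hA'⟩ := X0_dvd_of_aeval_u A hA
  obtain ⟨B', hB'⟩ := X0_dvd_of_aeval_u B hB
  refine ⟨A', B', hA', hB', ?_⟩
  have hg : aeval G (X (0 : Fin 4) : R4) = g1 := by simp [G]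
  have hfac : g1 * (aeval G A' + aeval G B' * g5) = 0 := by
    calc g1 * (aeval G A' + aeval G B' * g5)
        = aeval G (X 0 * A') + aeval G (X 0 * B') * g5 := by
          rw [map_mul, map_mul, hg]; ring
      _ = 0 := by rw [← hA', ← hB']; exact h
  rcases mul_eq_zero.mp hfac with h1 | h1
  · exact absurd h1 (by rw [g1]; exact X_ne_zero 1)
  · exact h1

lemma keyC : ∀ n (A B : R4), dd A + dd B ≤ n →
    aeval G A + aeval G B * g5 = 0 → A = 0 ∧ B = 0 := by
  intro n
  induction n with
  | zero =>
    intro A B hd h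
    obtain ⟨A', B', hA, hB, h'⟩ := descent A B h
    constructor
    · by_contra hA0
      have hA'0 : A' ≠ 0 := fun hz => hA0 (by rw [hA, hz, mul_zero])
      have := dd_lt A' hA'0
      rw [← hA] at this
      omega
    · by_contra hB0
      have hB'0 : B' ≠ 0 := fun hz => hB0 (by rw [hB, hz, mul_zero])
      have := dd_lt B' hB'0
      rw [← hB] at this
      omega
  | succ n ih =>
    intro A B hd h
    obtain ⟨A', B', hA, hB, h'⟩ := descent A B h
    rcases eq_or_ne A 0 with hA0 | hA0
    · rcases eq_or_ne B 0 with hB0 | hB0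
      · exact ⟨hA0, hB0⟩
      · have hAz : A' = 0 := zero_of_mul A' (by rw [← hA, hA0])
        have hB'0 : B' ≠ 0 := fun hz => hB0 (by rw [hB, hz, mul_zero])
        have h1 := dd_lt B' hB'0
        rw [← hB] at h1
        have hddA : dd A' = 0 := by rw [hAz]; simp [dd]
        have hsum : dd A' + dd B' ≤ n := by omega
        have hres := ih A' B' hsum h'
        exact ⟨hA0, by rw [hB, hres.2, mul_zero]⟩
    · have hA'0 : A' ≠ 0 := fun hz => hA0 (by rw [hA, hz, mul_zero])
      have h1 := dd_lt A' hA'0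
      rw [← hA] at h1
      have h2 : dd B' ≤ dd B := by
        rcases eq_or_ne B 0 with hB0 | hB0
        · have hBz : B' = 0 := zero_of_mul B' (by rw [← hB, hB0])
          rw [hBz, hB0]
        · have := dd_lt B' (fun hz => hB0 (by rw [hB, hz, mul_zero]))
          rw [← hB] at this
          omega
      have hsum : dd A' + dd B' ≤ n := by omega
      have hres := ih A' B' hsum h'
      exact ⟨by rw [hA, hres.1, mul_zero], by rw [hB, hres.2, mul_zero]⟩

lemma indep : AlgebraicIndependent K ![g1, g2, g3, g4] := by
  rw [algebraicIndependent_iff]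
  intro p hp
  have h0 : aeval G p + aeval G (0 : R4) * g5 = 0 := by
    rw [map_zero, zero_mul, add_zero]
    exact hp
  exact (keyC (dd p + dd 0) p 0 le_rfl h0).1

lemma rel : g1 ^ 6 * g4 + g1 ^ 4 * g2 * g3 + g1 ^ 5 * g5 + g2 ^ 3 + g5 ^ 2 = 0 := by
  have h2 : (2 : R5) = 0 := by
    have := CharP.cast_eq_zero R5 2
    exact_mod_cast this
  have key : g1 ^ 6 * g4 + g1 ^ 4 * g2 * g3 + g1 ^ 5 * g5 + g2 ^ 3 + g5 ^ 2 =
      2 * (X 3 ^ 6 + X 1 ^ 2 * X 2 * X 3 ^ 4 + X 1 ^ 3 * X 3 ^ 3 * X 4 + X 1 ^ 4 * X 2 ^ 2 * X 3 ^ 2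
        + 2 * X 1 ^ 5 * X 3 ^ 3 + X 1 ^ 5 * X 2 * X 3 * X 4 + X 1 ^ 6 * X 4 ^ 2
        + 2 * X 1 ^ 7 * X 2 * X 3 + 2 * X 1 ^ 8 * X 4 + X 1 ^ 10) := by
    rw [g1, g2, g3, g4, g5]; ring
  rw [key, h2, zero_mul]

noncomputable def rr : R5 :=
  X 0 ^ 6 * X 3 + X 0 ^ 4 * X 1 * X 2 + X 0 ^ 5 * X 4 + X 1 ^ 3 + X 4 ^ 2

noncomputable def ψ : R5 →ₐ[K] R5 := aeval ![g1, g2, g3, g4, g5]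

lemma ψ_rr : ψ rr = 0 := by
  have h : ψ rr = g1 ^ 6 * g4 + g1 ^ 4 * g2 * g3 + g1 ^ 5 * g5 + g2 ^ 3 + g5 ^ 2 := by
    simp [ψ, rr]
  rw [h, rel]

noncomputable def Φ : R5 ≃ₐ[K] Polynomial R4 :=
  (renameEquiv K (Equiv.swap (0 : Fin 5) 4)).trans (finSuccEquiv K 4)

lemma Φ_X0 : Φ (X 0) = Polynomial.C (X 3) := by
  have h4 : (MvPolynomial.finSuccEquiv K 4) (X (4 : Fin 5)) = Polynomial.C (X 3) :=
    finSuccEquiv_X_succ (j := 3)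
  simp [Φ, Equiv.swap_apply_left, h4]

lemma Φ_X1 : Φ (X 1) = Polynomial.C (X 0) := by
  have h : (MvPolynomial.finSuccEquiv K 4) (X (1 : Fin 5)) = Polynomial.C (X 0) :=
    finSuccEquiv_X_succ (j := 0)
  have hs : (Equiv.swap (0 : Fin 5) 4) 1 = 1 := by decide
  simp [Φ, hs, h]

lemma Φ_X2 : Φ (X 2) = Polynomial.C (X 1) := by
  have h : (MvPolynomial.finSuccEquiv K 4) (X (2 : Fin 5)) = Polynomial.C (X 1) :=
    finSuccEquiv_X_succ (j := 1)
  have hs : (Equiv.swap (0 : Fin 5) 4) 2 = 2 := by decide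
  simp [Φ, hs, h]

lemma Φ_X3 : Φ (X 3) = Polynomial.C (X 2) := by
  have h : (MvPolynomial.finSuccEquiv K 4) (X (3 : Fin 5)) = Polynomial.C (X 2) :=
    finSuccEquiv_X_succ (j := 2)
  have hs : (Equiv.swap (0 : Fin 5) 4) 3 = 3 := by decide
  simp [Φ, hs, h]

lemma Φ_X4 : Φ (X 4) = Polynomial.X := by
  simp [Φ, Equiv.swap_apply_right, finSuccEquiv_X_zero]

lemma Φ_rr : Φ rr = Polynomial.X ^ 2 + (Polynomial.C (X 3 ^ 5) * Polynomial.X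
    + Polynomial.C (X 3 ^ 6 * X 2 + X 3 ^ 4 * X 0 * X 1 + X 0 ^ 3)) := by
  rw [rr]
  simp only [map_add, map_mul, map_pow, Φ_X0, Φ_X1, Φ_X2, Φ_X3, Φ_X4]
  ring

lemma Φ_rr_monic : (Φ rr).Monic := by
  rw [Φ_rr]
  exact Polynomial.monic_X_pow_add
    (lt_of_le_of_lt Polynomial.degree_linear_le (by norm_num))

lemma Φ_rr_degree : (Φ rr).degree = 2 := by
  rw [Φ_rr]
  rw [Polynomial.degree_add_eq_left_of_degree_lt]
  · exact Polynomial.degree_X_pow 2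
  · rw [Polynomial.degree_X_pow]
    exact lt_of_le_of_lt Polynomial.degree_linear_le (by norm_num)

noncomputable def ι : R4 →ₐ[K] R5 := Φ.symm.toAlgHom.comp Polynomial.CAlgHom

lemma ι_C (c : R4) : ι c = Φ.symm (Polynomial.C c) := rfl

noncomputable def Gp : Fin 4 → R5 := ![g2, g3, g4, g1]

lemma ψ_ι (m : R4) : ψ (ι m) = aeval Gp m := by
  have hι : ∀ (a : Fin 5) (b : Fin 4), Φ (X a) = Polynomial.C (X b) → ι (X b) = X a := by
    intro a b hab
    rw [ι_C, ← hab, AlgEquiv.symm_apply_apply]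
  have h : ψ.comp ι = (aeval Gp : R4 →ₐ[K] R5) := by
    apply algHom_ext
    intro i
    match i with
    | 0 =>
      rw [AlgHom.comp_apply, aeval_X, hι 1 0 Φ_X1]
      simp [ψ, Gp]
    | 1 =>
      rw [AlgHom.comp_apply, aeval_X, hι 2 1 Φ_X2]
      simp [ψ, Gp]
    | 2 =>
      rw [AlgHom.comp_apply, aeval_X, hι 3 2 Φ_X3]
      simp [ψ, Gp]
    | 3 =>
      rw [AlgHom.comp_apply, aeval_X, hι 0 3 Φ_X0]
      simp [ψ, Gp]
  exact congrFun (congrArg (fun f => f.toFun) h) m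

noncomputable def cperm : Fin 4 → Fin 4 := ![1, 2, 3, 0]

lemma aeval_Gp (m : R4) : aeval Gp m = aeval G (rename cperm m) := by
  rw [aeval_rename]
  have h : G ∘ cperm = Gp := by
    funext i
    match i with
    | 0 => show G (cperm 0) = Gp 0; simp [G, Gp, cperm]
    | 1 => show G (cperm 1) = Gp 1; simp [G, Gp, cperm]
    | 2 => show G (cperm 2) = Gp 2; simp [G, Gp, cperm]
    | 3 => show G (cperm 3) = Gp 3; simp [G, Gp, cperm]
  rw [h]

lemma ker_ψ : RingHom.ker ψ = Ideal.span {rr} := by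
  apply le_antisymm
  · intro P hP
    rw [RingHom.mem_ker] at hP
    have hdiv := Polynomial.modByMonic_add_div (Φ P) (Φ rr)
    set m := Φ P %ₘ Φ rr with hm
    set q := Φ P /ₘ Φ rr with hq
    have hdeg1 : m.degree ≤ 1 := by
      by_cases hm0 : m = 0
      · simp [hm0]
      · have hlt : m.degree < 2 := by
          rw [← Φ_rr_degree]
          exact Polynomial.degree_modByMonic_lt _ Φ_rr_monic
        have h2 : m.natDegree < 2 := by
          rw [Polynomial.natDegree_lt_iff_degree_lt hm0]
          exact_mod_cast hlt
        rw [Polynomial.degree_eq_natDegree hm0]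
        exact_mod_cast (by omega : m.natDegree ≤ 1)
    have hmeq := Polynomial.eq_X_add_C_of_degree_le_one hdeg1
    have hPdecomp : P = ι (m.coeff 1) * X 4 + ι (m.coeff 0) + rr * Φ.symm q := by
      have h1 := congrArg Φ.symm hdiv
      rw [map_add, map_mul, AlgEquiv.symm_apply_apply, AlgEquiv.symm_apply_apply] at h1
      rw [← h1]
      congr 1
      nth_rewrite 1 [hmeq]
      rw [map_add, map_mul]
      have hX4 : Φ.symm Polynomial.X = X 4 := by rw [← Φ_X4, AlgEquiv.symm_apply_apply]
      rw [hX4, ι_C, ι_C]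
    have hψ4 : ψ (X 4) = g5 := by simp [ψ]
    have h0 : aeval Gp (m.coeff 0) + aeval Gp (m.coeff 1) * g5 = 0 := by
      have h2 : (0 : R5) = aeval Gp (m.coeff 1) * g5 + aeval Gp (m.coeff 0)
          + 0 * ψ (Φ.symm q) := by
        calc (0 : R5) = ψ P := hP.symm
          _ = _ := by
            rw [hPdecomp, map_add, map_add, map_mul, map_mul, ψ_ι, ψ_ι, hψ4, ψ_rr]
      rw [zero_mul, add_zero] at h2
      rw [add_comm]
      exact h2.symm
    have hcinj : Function.Injective cperm := by decide
    have hABeq : aeval G (rename cperm (m.coeff 0))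
        + aeval G (rename cperm (m.coeff 1)) * g5 = 0 := by
      rw [← aeval_Gp, ← aeval_Gp]
      exact h0
    obtain ⟨hA, hB⟩ := keyC (dd (rename cperm (m.coeff 0)) + dd (rename cperm (m.coeff 1)))
      (rename cperm (m.coeff 0)) (rename cperm (m.coeff 1)) le_rfl hABeq
    have hc0 : m.coeff 0 = 0 := rename_injective cperm hcinj (by rw [hA, map_zero])
    have hc1 : m.coeff 1 = 0 := rename_injective cperm hcinj (by rw [hB, map_zero])
    have hfin : P = rr * Φ.symm q := by
      rw [hPdecomp, hc0, hc1]
      simp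
    exact Ideal.mem_span_singleton.mpr ⟨Φ.symm q, hfin⟩
  · rw [Ideal.span_le, Set.singleton_subset_iff]
    rw [SetLike.mem_coe, RingHom.mem_ker]
    exact ψ_rr

end RelationsAmongGAux

/-- g_1, g_2, g_3, g_4 are algebraically independent; g_1⁶g_4 + g_1⁴g_2g_3 + g_1⁵g_5 + g_2³
+ g_5² = 0; and the ideal of all relations among g_1,…,g_5 is the principal ideal generated
by this relation. -/
theorem relations_among_g :
    AlgebraicIndependent (ZMod 2) ![g1, g2, g3, g4] ∧
      g1 ^ 6 * g4 + g1 ^ 4 * g2 * g3 + g1 ^ 5 * g5 + g2 ^ 3 + g5 ^ 2 = 0 ∧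
      RingHom.ker (aeval ![g1, g2, g3, g4, g5] :
          MvPolynomial (Fin 5) (ZMod 2) →ₐ[ZMod 2] MvPolynomial (Fin 5) (ZMod 2)) =
        Ideal.span
          {X 0 ^ 6 * X 3 + X 0 ^ 4 * X 1 * X 2 + X 0 ^ 5 * X 4 + X 1 ^ 3 + X 4 ^ 2} := by
  exact ⟨RelationsAmongGAux.indep, RelationsAmongGAux.rel, RelationsAmongGAux.ker_ψ⟩
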